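/- Let X be a Hausdorff locally convex space and K a weakly compact circled convex subset of X with K° ≠ X*. Then the function f := σ_{K°} (the support function of the polar of K) satisfies: f − x* attains its minimum on X (at 0) for every x* in the strict polar K°_s = {x* : σ_K(x*) < 1}, while f* = δ_{K°}, so the domain of the subdifferential of f* is contained in K° and hence is not all of X*. -/

import Mathlib

open Topology Set Pointwise Bornology

noncomputable section

section Defs

variable {X : Type*} [AddCommGroup X] [Module ℝ X] [TopologicalSpace X]

/-- Fenchel conjugate of an extended-real-valued function `f : X → ℝ ∪ {+∞}`. -/
def conjugate (f : X → EReal) (φ : X →L[ℝ] ℝ) : EReal := ⨆ x : X, (φ x : EReal) - f x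

/-- Moreau–Rockafellar subdifferential of `f : X → ℝ ∪ {+∞}` at `x`. -/
def subdiff (f : X → EReal) (x : X) : Set (X →L[ℝ] ℝ) :=
  {φ | ∀ y : X, ((φ (y - x) : ℝ) : EReal) + f x ≤ f y}

/-- A set `A ⊆ X` is weakly compact (compact for the weak topology `σ(X, X*)`). -/
def WeaklyCompact (A : Set X) : Prop := IsCompact (toWeakSpace ℝ X '' A)

/-- A set `A ⊆ X` is relatively weakly compact. -/
def RelWeaklyCompact (A : Set X) : Prop := IsCompact (closure (toWeakSpace ℝ X '' A))

/-- The directional asymptotic cone of a set of continuous linear functionals. -/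
def asympCone (A : Set (X →L[ℝ] ℝ)) : Set (X →L[ℝ] ℝ) :=
  {y | ∃ x ∈ A, ∀ l : ℝ, 0 ≤ l → x + l • y ∈ A}

/-- The class `ℰ(K)` of functions `φ : X → ℝ ∪ {+∞}` from Definition 3.1. -/
def EClass (K : Set (X →L[ℝ] ℝ)) : Set (X → EReal) :=
  {φ | (∀ ψ : X →L[ℝ] ℝ, conjugate φ ψ ≠ ⊥) ∧ conjugate φ 0 = 0 ∧
    asympCone K ⊆ {ψ | conjugate φ ψ ≠ ⊤} ∧ {ψ | conjugate φ ψ ≠ ⊤} ⊆ K ∧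
    (∀ ψ ∈ K \ asympCone K,
      sSup {v : EReal | ∃ η : ℝ, 0 < η ∧ conjugate φ (η • ψ) ≠ ⊤ ∧ v = conjugate φ (η • ψ)} = ⊤) ∧
    (∀ ψ : X →L[ℝ] ℝ, conjugate φ ψ ≠ ⊤ → ∃ x : X, ψ ∈ subdiff φ x)}

/-- Polar of a subset of `X`. -/
def pol (K : Set X) : Set (X →L[ℝ] ℝ) := {φ | ∀ x ∈ K, φ x ≤ 1}

/-- Support function of a subset of `X`. -/
def supportFn (A : Set X) (φ : X →L[ℝ] ℝ) : EReal := sSup ((fun x => ((φ x : ℝ) : EReal)) '' A)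

/-- A set is open for the Mackey topology `τ(X*,X)`: around each of its points it contains a
translate of the polar of some weakly compact balanced (circled) convex subset of `X`. -/
def MackeyOpen (U : Set (X →L[ℝ] ℝ)) : Prop :=
  ∀ φ ∈ U, ∃ K : Set X, WeaklyCompact K ∧ Balanced ℝ K ∧ Convex ℝ K ∧
    {ψ : X →L[ℝ] ℝ | ∀ x ∈ K, (ψ - φ) x ≤ 1} ⊆ U

/-- `F : X* → ℝ ∪ {±∞}` is continuous at `φ` for the Mackey topology `τ(X*,X)`. -/
def MackeyContinuousAt (F : (X →L[ℝ] ℝ) → EReal) (φ : X →L[ℝ] ℝ) : Prop :=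
  ∀ V ∈ 𝓝 (F φ), ∃ K : Set X, WeaklyCompact K ∧ Balanced ℝ K ∧ Convex ℝ K ∧
    ∀ ψ : X →L[ℝ] ℝ, (∀ x ∈ K, (ψ - φ) x ≤ 1) → F ψ ∈ V

/-- `f` is epi-pointed: `f*` is proper and `τ(X*,X)`-continuous at some point of its domain. -/
def EpiPointed (f : X → EReal) : Prop :=
  (∃ ψ : X →L[ℝ] ℝ, conjugate f ψ ≠ ⊤) ∧ (∀ ψ : X →L[ℝ] ℝ, conjugate f ψ ≠ ⊥) ∧
  ∃ φ : X →L[ℝ] ℝ, conjugate f φ ≠ ⊤ ∧ MackeyContinuousAt (conjugate f) φ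

/-- Relative compactness in `X × ℝ` for the product of the weak topology `σ(X, X*)` on `X`
with the usual topology on `ℝ`. -/
def RelWeaklyCompactProd (A : Set (X × ℝ)) : Prop :=
  IsCompact (closure ((fun p : X × ℝ => ((toWeakSpace ℝ X p.1 : WeakSpace ℝ X), p.2)) '' A))

/-- Epigraph of `f : X → ℝ ∪ {+∞}` (as a subset of `X × ℝ`). -/
def Epigr (f : X → EReal) : Set (X × ℝ) := {p | f p.1 ≤ (p.2 : EReal)}

/-- Inf-convolution of two extended-real-valued functions. -/
def infConv (f g : X → EReal) (x : X) : EReal := ⨅ z : X, f z + g (x - z)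

/-- Convexity for extended-real-valued functions. -/
def EConvex (f : X → EReal) : Prop :=
  ∀ x y : X, ∀ a b : ℝ, 0 ≤ a → 0 ≤ b → a + b = 1 →
    f (a • x + b • y) ≤ (a : EReal) * f x + (b : EReal) * f y

/-- The algebraic interior of a set of continuous linear functionals. -/
def algInt (A : Set (X →L[ℝ] ℝ)) : Set (X →L[ℝ] ℝ) :=
  {a ∈ A | ∀ ψ : X →L[ℝ] ℝ, ∃ δ > (0:ℝ), ∀ l ∈ Set.Icc (0:ℝ) δ, a + l • ψ ∈ A}

/-- Subdifferential of a real-valued function on `X*`, with respect to the pairing with `X`. -/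
def subdiffStar (g : (X →L[ℝ] ℝ) → ℝ) (φ : X →L[ℝ] ℝ) : Set X :=
  {x | ∀ ψ : X →L[ℝ] ℝ, (ψ - φ) x + g φ ≤ g ψ}

end Defs

section Defs2

variable {X : Type*} [AddCommGroup X] [Module ℝ X] [TopologicalSpace X]

/-- Support function (on `X`) of a set of continuous linear functionals. -/
def supportFnStar (A : Set (X →L[ℝ] ℝ)) (x : X) : EReal :=
  sSup ((fun ψ : X →L[ℝ] ℝ => ((ψ x : ℝ) : EReal)) '' A)

/-- Subdifferential of an extended-real-valued function on `X*`, w.r.t. the pairing with `X`. -/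
def subdiffStarE (F : (X →L[ℝ] ℝ) → EReal) (φ : X →L[ℝ] ℝ) : Set X :=
  {x | ∀ ψ : X →L[ℝ] ℝ, (((ψ - φ) x : ℝ) : EReal) + F φ ≤ F ψ}

end Defs2

variable {X : Type*} [AddCommGroup X] [Module ℝ X] [TopologicalSpace X]
  [IsTopologicalAddGroup X] [ContinuousSMul ℝ X] [LocallyConvexSpace ℝ X] [T2Space X]

open Classical in
/-- For a weakly compact circled convex `K` with `K° ≠ X*`, the function `f = σ_{K°}` has
`f - x*` attaining its minimum at `0` for every `x*` in the strict polar of `K`, `f* = δ_{K°}`,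
and the domain of `∂f*` is contained in `K°`, hence is not all of `X*`. -/
theorem supportFn_polar_attainsMin_and_domSubdiff_small
    (K : Set X) (hK : WeaklyCompact K) (hbal : Balanced ℝ K) (hconv : Convex ℝ K)
    (hprop : pol K ≠ Set.univ) :
    (∀ φ : X →L[ℝ] ℝ, supportFn K φ < 1 →
      ∀ x : X, supportFnStar (pol K) 0 - φ 0 ≤ supportFnStar (pol K) x - φ x) ∧
    (∀ φ : X →L[ℝ] ℝ, conjugate (supportFnStar (pol K)) φ =
      if φ ∈ pol K then (0 : EReal) else ⊤) ∧
    {φ : X →L[ℝ] ℝ | (subdiffStarE (conjugate (supportFnStar (pol K))) φ).Nonempty} ⊆ pol K ∧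
    {φ : X →L[ℝ] ℝ | (subdiffStarE (conjugate (supportFnStar (pol K))) φ).Nonempty} ≠
      Set.univ := by
  classical
  -- basic facts
  have h0pol : (0 : X →L[ℝ] ℝ) ∈ pol K := by intro x _; simp
  have hσ0 : supportFnStar (pol K) (0 : X) = 0 := by
    apply le_antisymm
    · apply sSup_le; rintro v ⟨ψ, -, rfl⟩; simp
    · exact le_sSup ⟨0, h0pol, by simp⟩
  have hle : ∀ φ ∈ pol K, ∀ x : X, ((φ x : ℝ) : EReal) ≤ supportFnStar (pol K) x :=
    fun φ hφ x => le_sSup ⟨φ, hφ, rfl⟩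
  have hKbound : ∀ x₀ ∈ K, ∀ t : ℝ, 0 ≤ t →
      supportFnStar (pol K) (t • x₀) ≤ (t : EReal) := by
    intro x₀ hx₀ t ht
    apply sSup_le
    rintro v ⟨ψ, hψ, rfl⟩
    have h1 : ψ (t • x₀) ≤ t := by
      calc ψ (t • x₀) = t * ψ x₀ := by simp
        _ ≤ t * 1 := mul_le_mul_of_nonneg_left (hψ x₀ hx₀) ht
        _ = t := mul_one t
    simpa using EReal.coe_le_coe_iff.2 h1
  have hsub0 : ∀ r : ℝ, ((r : EReal) - (r : EReal)) = 0 := by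
    intro r; rw [← EReal.coe_sub]; norm_num
  have hconj : ∀ φ : X →L[ℝ] ℝ, conjugate (supportFnStar (pol K)) φ =
      if φ ∈ pol K then (0 : EReal) else ⊤ := by
    intro φ
    split_ifs with hφ
    · apply le_antisymm
      · apply iSup_le; intro x
        calc ((φ x : ℝ) : EReal) - supportFnStar (pol K) x
            ≤ ((φ x : ℝ) : EReal) - ((φ x : ℝ) : EReal) :=
              EReal.sub_le_sub le_rfl (hle φ hφ x)
          _ = 0 := hsub0 _
      · have h0 : ((φ 0 : ℝ) : EReal) - supportFnStar (pol K) 0 = 0 := by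
          simp [hσ0]
        calc (0 : EReal) = ((φ 0 : ℝ) : EReal) - supportFnStar (pol K) 0 := h0.symm
          _ ≤ ⨆ x : X, ((φ x : ℝ) : EReal) - supportFnStar (pol K) x :=
              le_iSup (fun x => ((φ x : ℝ) : EReal) - supportFnStar (pol K) x) 0
    · -- φ ∉ pol K : conjugate is ⊤
      rw [EReal.eq_top_iff_forall_lt]
      intro r
      simp only [pol, Set.mem_setOf_eq, not_forall] at hφ
      obtain ⟨x₀, hx₀, hgt⟩ := hφ
      rw [not_le] at hgt
      set d : ℝ := φ x₀ - 1 with hd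
      have hdpos : 0 < d := by simp [hd]; linarith
      set t : ℝ := max 0 ((r + 1) / d) with htdef
      have ht0 : 0 ≤ t := le_max_left _ _
      have htd : r < t * d := by
        have : (r + 1) / d ≤ t := le_max_right _ _
        have h2 : r + 1 ≤ t * d := by
          rw [← div_le_iff₀ hdpos] at *; linarith
        linarith
      have key : ((t * d : ℝ) : EReal) ≤
          ((φ (t • x₀) : ℝ) : EReal) - supportFnStar (pol K) (t • x₀) := by
        have h3 : (φ (t • x₀) : ℝ) = t * φ x₀ := by simp
        calc ((t * d : ℝ) : EReal) = ((t * φ x₀ - t : ℝ) : EReal) := by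
              congr 1; rw [hd]; ring
          _ = ((t * φ x₀ : ℝ) : EReal) - ((t : ℝ) : EReal) := by rw [EReal.coe_sub]
          _ ≤ ((φ (t • x₀) : ℝ) : EReal) - supportFnStar (pol K) (t • x₀) := by
              rw [h3]; exact EReal.sub_le_sub le_rfl (hKbound x₀ hx₀ t ht0)
      calc (r : EReal) < ((t * d : ℝ) : EReal) := by exact_mod_cast htd
        _ ≤ ((φ (t • x₀) : ℝ) : EReal) - supportFnStar (pol K) (t • x₀) := key
        _ ≤ ⨆ x : X, ((φ x : ℝ) : EReal) - supportFnStar (pol K) x :=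
            le_iSup (fun x => ((φ x : ℝ) : EReal) - supportFnStar (pol K) x) (t • x₀)
  have hdom : {φ : X →L[ℝ] ℝ |
      (subdiffStarE (conjugate (supportFnStar (pol K))) φ).Nonempty} ⊆ pol K := by
    intro φ ⟨x, hx⟩
    by_contra hφ
    have h1 := hx 0
    rw [hconj 0, hconj φ, if_pos h0pol, if_neg hφ] at h1
    have : ((((0 : X →L[ℝ] ℝ) - φ) x : ℝ) : EReal) + ⊤ = ⊤ := EReal.coe_add_top _
    rw [this] at h1
    exact absurd h1 (by simp)
  refine ⟨?_, hconj, hdom, ?_⟩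
  · intro φ hφlt x
    have hφpol : φ ∈ pol K := by
      intro y hy
      have h1 : ((φ y : ℝ) : EReal) ≤ supportFn K φ :=
        le_sSup ⟨y, hy, rfl⟩
      have h2 : ((φ y : ℝ) : EReal) < 1 := lt_of_le_of_lt h1 hφlt
      exact_mod_cast h2.le
    have h0 : supportFnStar (pol K) 0 - ((φ 0 : ℝ) : EReal) = 0 := by simp [hσ0]
    rw [h0]
    calc (0 : EReal) = ((φ x : ℝ) : EReal) - ((φ x : ℝ) : EReal) := (hsub0 _).symm
      _ ≤ supportFnStar (pol K) x - ((φ x : ℝ) : EReal) :=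
          EReal.sub_le_sub (hle φ hφpol x) le_rfl
  · intro h
    exact hprop (Set.eq_univ_of_univ_subset (h ▸ hdom))

end
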